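/- Let n = k + t with 0 < t ≤ k. Then for any simple graph G on n vertices, the number of unordered pairs {x,y} with |deg(x) − deg(y)| < k is at least C(k+1,2) + C(t−1,2). -/

import Mathlib

open scoped Classical

/-- Number of unordered pairs of distinct vertices whose degrees differ by less than `k`. -/
noncomputable def closeCount (n k : ℕ) (G : SimpleGraph (Fin n)) : ℕ :=
  (Finset.univ.filter (fun p : Fin n × Fin n =>
    p.1 < p.2 ∧ |(G.degree p.1 : ℤ) - (G.degree p.2 : ℤ)| < k)).card

open Finset


lemma choose_add_two (a b : ℕ) : (a + b).choose 2 = a.choose 2 + b.choose 2 + a * b := by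
  induction b with
  | zero => simp
  | succ b ih =>
    have h1 : a + (b+1) = (a + b) + 1 := by ring
    have h2 : ((a+b)+1).choose 2 = (a+b).choose 2 + (a+b) := by
      rw [Nat.choose_succ_succ]; simp [Nat.add_comm]
    have h3 : (b+1).choose 2 = b.choose 2 + b := by
      rw [Nat.choose_succ_succ]; simp [Nat.add_comm]
    rw [h1, h2, h3, ih]; ring

lemma card_lt_pairs (n : ℕ) :
    (Finset.univ.filter (fun p : Fin n × Fin n => p.1 < p.2)).card = n.choose 2 := by
  rw [Finset.card_eq_sum_card_fiberwise (f := Prod.snd) (t := Finset.univ) (fun x _ => mem_univ _)]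
  have key : ∀ y : Fin n, ((Finset.univ.filter (fun p : Fin n × Fin n => p.1 < p.2)).filter
      (fun p => p.snd = y)).card = (y : ℕ) := by
    intro y
    rw [show ((Finset.univ.filter (fun p : Fin n × Fin n => p.1 < p.2)).filter
      (fun p => p.snd = y)) = (Finset.Iio y).image (fun x => (x, y)) by
        ext p
        simp only [mem_filter, mem_univ, true_and, mem_image, mem_Iio]
        constructor
        · rintro ⟨h1, h2⟩
          exact ⟨p.1, h2 ▸ h1, by rw [← h2]⟩
        · rintro ⟨x, hx, rfl⟩; exact ⟨hx, rfl⟩]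
    rw [Finset.card_image_of_injective _ (fun a b h => by simpa using h)]
    simp
  calc (∑ y : Fin n, ((Finset.univ.filter (fun p : Fin n × Fin n => p.1 < p.2)).filter
      (fun p => p.snd = y)).card) = ∑ y : Fin n, (y : ℕ) := by
        exact Finset.sum_congr rfl (fun y _ => key y)
    _ = ∑ i ∈ Finset.range n, i := by rw [Finset.sum_range fun i => i]
    _ = n.choose 2 := by rw [Nat.choose_two_right, Finset.sum_range_id]

section
variable (n k : ℕ) (G : SimpleGraph (Fin n))

noncomputable def farSet : Finset (Fin n × Fin n) :=
  (Finset.univ.filter (fun p : Fin n × Fin n =>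
    p.1 < p.2 ∧ ¬ |(G.degree p.1 : ℤ) - (G.degree p.2 : ℤ)| < k))

noncomputable def farSet2 : Finset (Fin n × Fin n) :=
  (Finset.univ.filter (fun p : Fin n × Fin n =>
    p.1 ≠ p.2 ∧ G.degree p.1 + k ≤ G.degree p.2))

lemma close_add_far :
    closeCount n k G + (farSet n k G).card =
      (Finset.univ.filter (fun p : Fin n × Fin n => p.1 < p.2)).card := by
  classical
  rw [closeCount, farSet]
  rw [← Finset.filter_filter, ← Finset.filter_filter]
  exact Finset.card_filter_add_card_filter_not _

lemma mem_farSet {p : Fin n × Fin n} : p ∈ farSet n k G ↔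
    p.1 < p.2 ∧ ¬ |(G.degree p.1 : ℤ) - (G.degree p.2 : ℤ)| < k := by
  rw [farSet, mem_filter]; simp

lemma mem_farSet2 {p : Fin n × Fin n} : p ∈ farSet2 n k G ↔
    p.1 ≠ p.2 ∧ G.degree p.1 + k ≤ G.degree p.2 := by
  rw [farSet2, mem_filter]; simp

lemma farSet_card (hk : 0 < k) : (farSet n k G).card = (farSet2 n k G).card := by
  classical
  refine Finset.card_nbij' (fun p => if G.degree p.1 + k ≤ G.degree p.2 then p else p.swap)
    (fun q => if q.1 < q.2 then q else q.swap) ?_ ?_ ?_ ?_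
  · intro p hp
    beta_reduce
    rw [Finset.mem_coe, mem_farSet] at hp
    obtain ⟨hlt, habs⟩ := hp
    have h2 : G.degree p.1 + k ≤ G.degree p.2 ∨ G.degree p.2 + k ≤ G.degree p.1 := by
      rcases abs_cases ((G.degree p.1 : ℤ) - (G.degree p.2 : ℤ)) with ⟨he, _⟩ | ⟨he, _⟩ <;>
        rw [he] at habs <;> omega
    rw [Finset.mem_coe, mem_farSet2]
    rcases h2 with h | h
    · rw [if_pos h]; exact ⟨ne_of_lt hlt, h⟩
    · rw [if_neg (by omega)]
      exact ⟨(ne_of_lt hlt).symm, h⟩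
  · intro q hq
    beta_reduce
    rw [Finset.mem_coe, mem_farSet2] at hq
    obtain ⟨hne, hdeg⟩ := hq
    rw [Finset.mem_coe, mem_farSet]
    by_cases h : q.1 < q.2
    · rw [if_pos h]
      refine ⟨h, ?_⟩
      rcases abs_cases ((G.degree q.1 : ℤ) - (G.degree q.2 : ℤ)) with ⟨he, _⟩ | ⟨he, _⟩ <;>
        rw [he] <;> omega
    · rw [if_neg h]
      have h2 : q.2 < q.1 := lt_of_le_of_ne (not_lt.mp h) (Ne.symm hne)
      simp only [Prod.fst_swap, Prod.snd_swap]
      refine ⟨h2, ?_⟩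
      rcases abs_cases ((G.degree q.2 : ℤ) - (G.degree q.1 : ℤ)) with ⟨he, _⟩ | ⟨he, _⟩ <;>
        rw [he] <;> omega
  · intro p hp
    beta_reduce
    rw [Finset.mem_coe, mem_farSet] at hp
    by_cases h : G.degree p.1 + k ≤ G.degree p.2
    · rw [if_pos h, if_pos hp.1]
    · have : ¬ (p.swap.1 < p.swap.2) := by
        simp only [Prod.fst_swap, Prod.snd_swap]
        exact fun hc => absurd hp.1 (asymm hc)
      rw [if_neg h, if_neg this, Prod.swap_swap]
  · intro q hq
    beta_reduce
    rw [Finset.mem_coe, mem_farSet2] at hq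
    by_cases h : q.1 < q.2
    · rw [if_pos h, if_pos hq.2]
    · have h2 : ¬ (G.degree q.swap.1 + k ≤ G.degree q.swap.2) := by
        simp only [Prod.fst_swap, Prod.snd_swap]
        have := hq.2
        omega
      rw [if_neg h, if_neg h2, Prod.swap_swap]
end

lemma arith2 (k t a b u v : ℕ) (htk : t ≤ k) (hu : u ≤ a) (hv : v ≤ b)
    (hab : a + b ≤ k + t) (huv : k + 2 ≤ u + v) : a * b ≤ (k+1) * (t-1) + u * v := by
  obtain ⟨p, rfl⟩ := Nat.exists_eq_add_of_le hu
  obtain ⟨q, rfl⟩ := Nat.exists_eq_add_of_le hv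
  have ht2 : 2 ≤ t := by omega
  obtain ⟨t', rfl⟩ := Nat.exists_eq_add_of_le ht2
  have h1 : 2 + t' - 1 = 1 + t' := by omega
  rw [h1]
  have key : p * q ≤ u * p + v * q := by
    rcases le_or_gt p v with h | h
    · nlinarith
    · have hq : q ≤ u := by nlinarith
      nlinarith
  zify at key hab huv htk ⊢
  nlinarith [key, mul_nonneg (show (0:ℤ) ≤ (u:ℤ)+(v:ℤ) - ((k:ℤ)+2) by omega)
      (show (0:ℤ) ≤ (u:ℤ)+(v:ℤ) - (t':ℤ) by omega),
    mul_nonneg (show (0:ℤ) ≤ (u:ℤ)+(v:ℤ) by positivity)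
      (show (0:ℤ) ≤ (k:ℤ)+2+(t':ℤ) - ((u:ℤ)+(p:ℤ)+((v:ℤ)+(q:ℤ))) by omega)]


lemma far_bound (k t : ℕ) (ht : 0 < t) (htk : t ≤ k) (G : SimpleGraph (Fin (k+t))) :
    (farSet2 (k+t) k G).card ≤ (k+1) * (t-1) := by
  classical
  have hdeg : ∀ v : Fin (k+t), G.degree v < (k+t) := fun v => by
    simpa [Fintype.card_fin] using G.degree_lt_card_verts v
  set A : Finset (Fin (k+t)) := univ.filter (fun v => G.degree v < t) with hA
  set B : Finset (Fin (k+t)) := univ.filter (fun v => k ≤ G.degree v) with hB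
  set U : ℕ → Finset (Fin (k+t)) := fun s => univ.filter (fun v => s < G.degree v ∧ G.degree v < t) with hU
  set V : ℕ → Finset (Fin (k+t)) := fun s => univ.filter (fun v => k ≤ G.degree v ∧ G.degree v ≤ k + s) with hV
  have hmemA : ∀ p ∈ farSet2 (k+t) k G, p.1 ∈ A := by
    intro p hp
    rw [mem_farSet2] at hp
    simp only [hA, mem_filter, mem_univ, true_and]
    have := hdeg p.2
    omega
  have hmemB : ∀ p ∈ farSet2 (k+t) k G, p.2 ∈ B := by
    intro p hp
    rw [mem_farSet2] at hp
    simp only [hB, mem_filter, mem_univ, true_and]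
    omega
  -- split into edges and non-edges
  set FE := (farSet2 (k+t) k G).filter (fun p => G.Adj p.1 p.2) with hFE
  set FN := (farSet2 (k+t) k G).filter (fun p => ¬ G.Adj p.1 p.2) with hFN
  have hsplit : FE.card + FN.card = (farSet2 (k+t) k G).card :=
    Finset.card_filter_add_card_filter_not _
  -- edge bound
  have hE : FE.card ≤ ∑ x ∈ A, G.degree x := by
    rw [Finset.card_eq_sum_card_fiberwise (f := Prod.fst) (t := A)
      (fun p hp => hmemA p (Finset.mem_of_mem_filter p hp))]
    apply Finset.sum_le_sum
    intro x hx
    rw [← SimpleGraph.card_neighborFinset_eq_degree]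
    apply Finset.card_le_card_of_injOn (fun p => p.2)
    · intro p hp
      simp only [Finset.mem_coe, mem_filter] at hp
      obtain ⟨⟨hp1, hadj⟩, hfst⟩ := hp
      rw [Finset.mem_coe, SimpleGraph.mem_neighborFinset, ← hfst]
      exact hadj
    · intro p hp p' hp' hpp
      simp only [Finset.mem_coe, mem_filter] at hp hp'
      exact Prod.ext (hp.2.trans hp'.2.symm) hpp
  -- non-edge bound
  have hNcard : ∀ y : Fin (k+t), (univ \ insert y (G.neighborFinset y)).card = (k+t) - 1 - G.degree y := by
    intro y
    rw [Finset.card_sdiff_of_subset (Finset.subset_univ _), Finset.card_insert_of_notMem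
      (SimpleGraph.notMem_neighborFinset_self G y), SimpleGraph.card_neighborFinset_eq_degree]
    simp only [Finset.card_univ, Fintype.card_fin]
    have := hdeg y
    omega
  have hN : FN.card ≤ ∑ y ∈ B, ((k+t) - 1 - G.degree y) := by
    rw [Finset.card_eq_sum_card_fiberwise (f := Prod.snd) (t := B)
      (fun p hp => hmemB p (Finset.mem_of_mem_filter p hp))]
    apply Finset.sum_le_sum
    intro y hy
    rw [← hNcard y]
    apply Finset.card_le_card_of_injOn (fun p => p.1)
    · intro p hp
      simp only [Finset.mem_coe, mem_filter] at hp
      obtain ⟨⟨hp1, hnadj⟩, hsnd⟩ := hp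
      rw [mem_farSet2] at hp1
      rw [Finset.mem_coe, Finset.mem_sdiff, Finset.mem_insert]
      refine ⟨mem_univ _, ?_⟩
      push_neg
      constructor
      · rw [← hsnd]; exact hp1.1
      · rw [SimpleGraph.mem_neighborFinset, ← hsnd]
        intro hc
        exact hnadj hc.symm
    · intro p hp p' hp' hpp
      simp only [Finset.mem_coe, mem_filter] at hp hp'
      exact Prod.ext hpp (hp.2.trans hp'.2.symm)
  -- rewrite sums as level sums
  have hPhiA : ∑ x ∈ A, G.degree x = ∑ s ∈ range (t-1), (U s).card := by
    have step1 : ∀ x ∈ A, G.degree x = ((range (t-1)).filter (fun s => s < G.degree x)).card := by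
      intro x hx
      simp only [hA, mem_filter, mem_univ, true_and] at hx
      rw [show ((range (t-1)).filter (fun s => s < G.degree x)) = range (G.degree x) by
        ext s; simp only [mem_filter, mem_range]; omega]
      rw [Finset.card_range]
    rw [Finset.sum_congr rfl step1]
    simp only [Finset.card_filter]
    rw [Finset.sum_comm]
    apply Finset.sum_congr rfl
    intro s hs
    rw [← Finset.card_filter]
    congr 1
    ext v
    simp only [hU, hA, mem_filter, mem_univ, true_and]
    tauto
  have hPhiB : ∑ y ∈ B, ((k+t) - 1 - G.degree y) = ∑ s ∈ range (t-1), (V s).card := by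
    have step1 : ∀ y ∈ B, (k+t) - 1 - G.degree y
        = ((range (t-1)).filter (fun s => G.degree y ≤ k + s)).card := by
      intro y hy
      simp only [hB, mem_filter, mem_univ, true_and] at hy
      rw [show ((range (t-1)).filter (fun s => G.degree y ≤ k + s))
          = Finset.Ico (G.degree y - k) (t-1) by
        ext s; simp only [mem_filter, mem_range, Finset.mem_Ico]; omega]
      rw [Nat.card_Ico]
      have := hdeg y
      omega
    rw [Finset.sum_congr rfl step1]
    simp only [Finset.card_filter]
    rw [Finset.sum_comm]
    apply Finset.sum_congr rfl
    intro s hs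
    rw [← Finset.card_filter]
    congr 1
    ext v
    simp only [hV, hB, mem_filter, mem_univ, true_and]
  -- main case split
  by_cases hPhi : (farSet2 (k+t) k G).card ≤ (k+1) * (t-1)
  · exact hPhi
  push_neg at hPhi
  -- pigeonhole
  have hsum : ∑ s ∈ range (t-1), (k+1) < ∑ s ∈ range (t-1), ((U s).card + (V s).card) := by
    rw [Finset.sum_const, Finset.card_range, smul_eq_mul, mul_comm]
    calc (k+1) * (t-1) < (farSet2 (k+t) k G).card := hPhi
      _ = FE.card + FN.card := hsplit.symm
      _ ≤ (∑ x ∈ A, G.degree x) + ∑ y ∈ B, ((k+t) - 1 - G.degree y) := Nat.add_le_add hE hN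
      _ = ∑ s ∈ range (t-1), ((U s).card + (V s).card) := by
          rw [hPhiA, hPhiB, ← Finset.sum_add_distrib]
  obtain ⟨s, hs, hks⟩ := Finset.exists_lt_of_sum_lt hsum
  -- subset bound
  have hUA : U s ⊆ A := by
    intro v hv
    simp only [hU, hA, mem_filter, mem_univ, true_and] at hv ⊢
    exact hv.2
  have hVB : V s ⊆ B := by
    intro v hv
    simp only [hV, hB, mem_filter, mem_univ, true_and] at hv ⊢
    exact hv.1
  have hsub : farSet2 (k+t) k G ⊆ (A ×ˢ B) \ (U s ×ˢ V s) := by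
    intro p hp
    have h1 := hmemA p hp
    have h2 := hmemB p hp
    rw [mem_farSet2] at hp
    rw [Finset.mem_sdiff, Finset.mem_product]
    refine ⟨⟨h1, h2⟩, ?_⟩
    rw [Finset.mem_product]
    push_neg
    intro hu1
    simp only [hU, hV, mem_filter, mem_univ, true_and] at hu1 ⊢
    intro hk1
    omega
  have hcard : (farSet2 (k+t) k G).card ≤ A.card * B.card - (U s).card * (V s).card := by
    calc (farSet2 (k+t) k G).card ≤ ((A ×ˢ B) \ (U s ×ˢ V s)).card := Finset.card_le_card hsub
      _ = A.card * B.card - (U s).card * (V s).card := by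
          rw [Finset.card_sdiff_of_subset (Finset.product_subset_product hUA hVB),
            Finset.card_product, Finset.card_product]
  -- disjointness and total count
  have hABdisj : Disjoint A B := by
    rw [Finset.disjoint_left]
    intro v hv hv2
    simp only [hA, mem_filter, mem_univ, true_and] at hv
    simp only [hB, mem_filter, mem_univ, true_and] at hv2
    omega
  have htot : A.card + B.card ≤ k + t := by
    rw [← Finset.card_union_of_disjoint hABdisj]
    calc (A ∪ B).card ≤ (univ : Finset (Fin (k+t))).card := Finset.card_le_card (Finset.subset_univ _)
      _ = k + t := by simp [Finset.card_univ, Fintype.card_fin]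
  have harith := arith2 k t A.card B.card (U s).card (V s).card htk
    (Finset.card_le_card hUA) (Finset.card_le_card hVB) htot (by omega)
  calc (farSet2 (k+t) k G).card ≤ A.card * B.card - (U s).card * (V s).card := hcard
    _ ≤ ((k+1) * (t-1) + (U s).card * (V s).card) - (U s).card * (V s).card :=
        Nat.sub_le_sub_right harith _
    _ = (k+1) * (t-1) := by rw [Nat.add_sub_cancel]

theorem stmt_6 (n k t : ℕ) (ht : 0 < t) (htk : t ≤ k) (hn : n = k + t)
    (G : SimpleGraph (Fin n)) :
    Nat.choose (k + 1) 2 + Nat.choose (t - 1) 2 ≤ closeCount n k G := by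
  subst hn
  have hk : 0 < k := lt_of_lt_of_le ht htk
  have e1 := close_add_far (k+t) k G
  rw [card_lt_pairs] at e1
  have e2 := farSet_card (k+t) k G hk
  have e3 := far_bound k t ht htk G
  have e4 : (k+t).choose 2 = (k+1).choose 2 + (t-1).choose 2 + (k+1)*(t-1) := by
    have h : k + t = (k+1) + (t-1) := by omega
    rw [h, choose_add_two]
  linarith [e1, e2, e3, e4]
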